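/- arXiv:1111.6818 — 4 statements merged into one kernel-verified Lean document; each statement's English description precedes it below -/
import Mathlib

section
/- Consider n cells on the circle ℝ/ℤ evolving by dx_i/dt = 1 + a(x_i, x̄), where a(x_i, x̄) = 0 unless x_i ∈ R = [r,1) and some x_j ∈ S = [0,s), and a ≥ 0 always (positive feedback), with 0 < v_min ≤ 1 + a ≤ v_max. If at time t_0 the gap from cell x_{i-1} to the next cell x_i in the direction of flow has width w ≥ (1-r)+s, then for all t ≥ t_0 the gap width is nondecreasing: w(t) ≥ w(t_0). -/
/-- In an RS-feedback system with positive feedback (a ≥ 0, vanishing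
unless the cell is in R = [r,1) and some cell is in S = [0,s), speeds in
[v_min, v_max]), if the gap between adjacent cells x_{i₀} (behind) and x_{i₁}
(ahead) has width ≥ (1-r)+s at time t₀, then for all later times the gap width is
nondecreasing.  Cells are represented by real-valued lifts; circle position is the
fractional part. -/
theorem stmt_2 (n : ℕ) (s r vmin vmax : ℝ) (hs : 0 < s) (hsr : s < r) (hr : r < 1)
    (a : Fin n → (Fin n → ℝ) → ℝ)
    (hpos : ∀ i y, 0 ≤ a i y)
    (hvanish : ∀ i y,
      ¬ (Int.fract (y i) ∈ Set.Ico r 1 ∧ ∃ j, Int.fract (y j) ∈ Set.Ico 0 s) →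
      a i y = 0)
    (hvmin : 0 < vmin)
    (hbd : ∀ i y, vmin ≤ 1 + a i y ∧ 1 + a i y ≤ vmax)
    (x : ℝ → Fin n → ℝ)
    (hode : ∀ i t, HasDerivAt (fun τ => x τ i) (1 + a i (x t)) t)
    (t0 : ℝ) (i₀ i₁ : Fin n)
    -- the lift of cell i₁ stays ahead of that of cell i₀, within one full turn
    (horder : ∀ t, t0 ≤ t → x t i₀ ≤ x t i₁ ∧ x t i₁ ≤ x t i₀ + 1)
    -- the gap from i₀ to i₁ contains no cells (adjacency)
    (hadj : ∀ t, t0 ≤ t → ∀ j, ¬ ∃ m : ℤ, x t i₀ < x t j + m ∧ x t j + m < x t i₁)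
    -- initial gap width at least |R| + |S|
    (hgap : (1 - r) + s ≤ x t0 i₁ - x t0 i₀) :
    ∀ t1 t2, t0 ≤ t1 → t1 ≤ t2 → x t1 i₁ - x t1 i₀ ≤ x t2 i₁ - x t2 i₀ := by
  set g : ℝ → ℝ := fun t => x t i₁ - x t i₀ with hgdef
  have hg' : ∀ t, HasDerivAt g (a i₁ (x t) - a i₀ (x t)) t := by
    intro t
    have h := (hode i₁ t).sub (hode i₀ t)
    have he : (1 + a i₁ (x t)) - (1 + a i₀ (x t)) = a i₁ (x t) - a i₀ (x t) := by ring
    rw [he] at h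
    exact h
  have hgdiff : Differentiable ℝ g := fun t => (hg' t).differentiableAt
  have hgcont : Continuous g := hgdiff.continuous
  have hvmax1 : (1:ℝ) ≤ vmax := by
    have h1 := hbd i₀ (fun _ => 0)
    have h2 := hpos i₀ (fun _ => 0)
    linarith [h1.2]
  -- key geometric lemma from adjacency
  have key2 : ∀ t, t0 ≤ t → a i₀ (x t) ≠ 0 →
      ∃ j, g t ≤ Int.fract (x t j) + 1 - Int.fract (x t i₀) ∧
        Int.fract (x t j) < s ∧ r ≤ Int.fract (x t i₀) := by
    intro t ht hne
    have hcond : Int.fract (x t i₀) ∈ Set.Ico r 1 ∧ ∃ j, Int.fract (x t j) ∈ Set.Ico 0 s := by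
      by_contra hc
      exact hne (hvanish i₀ (x t) hc)
    obtain ⟨⟨hp1, hp2⟩, j, hj1, hj2⟩ := hcond
    refine ⟨j, ?_, hj2, hp1⟩
    set d := Int.fract (x t j) + 1 - Int.fract (x t i₀) with hd
    have hd0 : 0 < d := by
      have := Int.fract_nonneg (x t j)
      rw [hd]; linarith
    have hm : x t j + ((⌊x t i₀⌋ - ⌊x t j⌋ + 1 : ℤ) : ℝ) = x t i₀ + d := by
      rw [hd]
      simp only [Int.fract]
      push_cast
      ring
    by_contra hlt
    push_neg at hlt
    have hgt : g t = x t i₁ - x t i₀ := rfl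
    exact hadj t ht j ⟨⌊x t i₀⌋ - ⌊x t j⌋ + 1,
      by rw [hm]; constructor <;> linarith⟩
  -- speed bounds
  have hub : ∀ j t t', t ≤ t' → x t' j - x t j ≤ vmax * (t' - t) := by
    intro j t t' htt
    have hmono : Monotone (fun τ => vmax * τ - x τ j) := by
      apply monotone_of_deriv_nonneg
      · exact fun τ => ((differentiable_id.const_mul vmax) τ).sub (hode j τ).differentiableAt
      · intro τ
        have hD : HasDerivAt (fun τ => vmax * τ - x τ j) (vmax * 1 - (1 + a j (x τ))) τ :=
          ((hasDerivAt_id τ).const_mul vmax).sub (hode j τ)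
        rw [hD.deriv]
        have := (hbd j (x τ)).2
        linarith
    have := hmono htt
    simp only at this
    linarith
  have hlb : ∀ j t t', t ≤ t' → vmin * (t' - t) ≤ x t' j - x t j := by
    intro j t t' htt
    have hmono : Monotone (fun τ => x τ j - vmin * τ) := by
      apply monotone_of_deriv_nonneg
      · exact fun τ => (hode j τ).differentiableAt.sub ((differentiable_id.const_mul vmin) τ)
      · intro τ
        have hD : HasDerivAt (fun τ => x τ j - vmin * τ) ((1 + a j (x τ)) - vmin * 1) τ :=
          (hode j τ).sub ((hasDerivAt_id τ).const_mul vmin)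
        rw [hD.deriv]
        have := (hbd j (x τ)).1
        linarith
    have := hmono htt
    simp only at this
    linarith
  -- g decreases at rate at most vmax - 1
  have hgC : ∀ t t', t ≤ t' → g t - (vmax - 1) * (t' - t) ≤ g t' := by
    intro t t' htt
    have hmono : Monotone (fun τ => g τ + (vmax - 1) * τ) := by
      apply monotone_of_deriv_nonneg
      · exact fun τ => (hgdiff τ).add ((differentiable_id.const_mul (vmax - 1)) τ)
      · intro τ
        have hD : HasDerivAt (fun τ => g τ + (vmax - 1) * τ)
            ((a i₁ (x τ) - a i₀ (x τ)) + (vmax - 1) * 1) τ :=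
          (hg' τ).add ((hasDerivAt_id τ).const_mul (vmax - 1))
        rw [hD.deriv]
        have h1 := (hbd i₀ (x τ)).2
        have h2 := hpos i₁ (x τ)
        linarith
    have := hmono htt
    simp only at this
    linarith
  -- Step 1: invariance of the gap bound
  have hinv : ∀ t, t0 ≤ t → s + 1 - r ≤ g t := by
    by_contra hcon
    push_neg at hcon
    obtain ⟨t', ht'0, ht'g⟩ := hcon
    set A := {t : ℝ | t ∈ Set.Icc t0 t' ∧ s + 1 - r ≤ g t} with hA
    have hgt0 : g t0 = x t0 i₁ - x t0 i₀ := rfl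
    have hAne : A.Nonempty := ⟨t0, ⟨le_refl _, ht'0⟩, by rw [hgt0]; linarith⟩
    have hAbdd : BddAbove A := ⟨t', fun τ hτ => hτ.1.2⟩
    have hAclosed : IsClosed A := by
      have hAeq : A = Set.Icc t0 t' ∩ g ⁻¹' Set.Ici (s + 1 - r) := by
        ext τ
        simp [hA, Set.mem_Ici, and_comm]
      rw [hAeq]
      exact isClosed_Icc.inter (isClosed_Ici.preimage hgcont)
    set T := sSup A with hT
    have hTA : T ∈ A := hAclosed.csSup_mem hAne hAbdd
    obtain ⟨⟨hT0, hTt'⟩, hgT⟩ := hTA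
    have hTlt : T < t' := by
      rcases lt_or_eq_of_le hTt' with h | h
      · exact h
      · exfalso; rw [h] at hgT; linarith
    have hneF : (Finset.univ : Finset (Fin n)).Nonempty := ⟨i₀, Finset.mem_univ _⟩
    set μ := Finset.univ.inf' hneF
      (fun j => if Int.fract (x T j) < s then s - Int.fract (x T j) else 1) with hμ
    have hμpos : 0 < μ := by
      rw [hμ, Finset.lt_inf'_iff]
      intro j _
      split
      · next h => linarith
      · norm_num
    set K := 2 * vmax - 1 with hK
    have hKpos : (1:ℝ) ≤ K := by rw [hK]; linarith
    set ε := min (t' - T) (min (s / (2*K)) (μ / (2*K))) with hε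
    have hεpos : 0 < ε := by
      apply lt_min
      · linarith
      · apply lt_min <;> positivity
    set t1 := T + ε with ht1
    have h1 : T < t1 := by rw [ht1]; linarith
    have h2 : t1 ≤ t' := by
      have := min_le_left (t' - T) (min (s / (2*K)) (μ / (2*K)))
      rw [ht1]; rw [hε]; linarith
    have hgt1 : g t1 < s + 1 - r := by
      by_contra hge
      push_neg at hge
      have hmem : t1 ∈ A := ⟨⟨by linarith, h2⟩, hge⟩
      have : t1 ≤ T := le_csSup hAbdd hmem
      linarith
    obtain ⟨τ, hτ, hslope⟩ := exists_hasDerivAt_eq_slope g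
      (fun τ => a i₁ (x τ) - a i₀ (x τ)) h1 hgcont.continuousOn (fun τ _ => hg' τ)
    have hslopeneg : a i₁ (x τ) - a i₀ (x τ) < 0 := by
      rw [hslope]
      apply div_neg_of_neg_of_pos <;> linarith
    have hane : a i₀ (x τ) ≠ 0 := by
      have := hpos i₁ (x τ)
      intro h0
      rw [h0] at hslopeneg
      linarith
    obtain ⟨j, hdj, hFs, hrp⟩ := key2 τ (by linarith [hτ.1]) hane
    set δ := τ - T with hδ
    have hδ0 : 0 < δ := by rw [hδ]; linarith [hτ.1]
    have hδε : δ < ε := by rw [hδ]; have := hτ.2; rw [ht1] at this; linarith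
    have hgτ : s + 1 - r - (vmax - 1) * δ ≤ g τ := by
      have := hgC T τ (le_of_lt hτ.1)
      rw [hδ]; linarith
    have hF0 : s - (vmax - 1) * δ ≤ Int.fract (x τ j) := by
      have h1 := Int.fract_lt_one (x τ i₀)
      linarith
    set Δ := x τ j - x T j with hΔ
    have hΔlb : vmin * δ ≤ Δ := hlb j T τ (le_of_lt hτ.1)
    have hΔub : Δ ≤ vmax * δ := hub j T τ (le_of_lt hτ.1)
    have hΔ0 : 0 < Δ := lt_of_lt_of_le (by positivity) hΔlb
    have hKδs : K * δ < s / 2 := by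
      have h := hδε.trans_le ((min_le_right _ _).trans (min_le_left _ _))
      have hK0 : (0:ℝ) < K := by linarith
      calc K * δ < K * (s / (2*K)) := by exact mul_lt_mul_of_pos_left h hK0
        _ = s / 2 := by field_simp
    have hKδμ : K * δ < μ / 2 := by
      have h := hδε.trans_le ((min_le_right _ _).trans (min_le_right _ _))
      have hK0 : (0:ℝ) < K := by linarith
      calc K * δ < K * (μ / (2*K)) := by exact mul_lt_mul_of_pos_left h hK0
        _ = μ / 2 := by field_simp
    have hΔF : Δ ≤ Int.fract (x τ j) := by
      have : vmax * δ ≤ s - (vmax - 1) * δ := by rw [hK] at hKδs; nlinarith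
      linarith
    have hfT : Int.fract (x T j) = Int.fract (x τ j) - Δ := by
      have hfl := Int.floor_add_fract (x τ j)
      have hx : x T j = (⌊x τ j⌋ : ℝ) + (Int.fract (x τ j) - Δ) := by
        rw [hΔ] at *; linarith
      rw [hx, Int.fract_intCast_add, Int.fract_eq_self.mpr
        ⟨by linarith, by linarith [Int.fract_lt_one (x τ j)]⟩]
    have hltT : Int.fract (x T j) < s := by rw [hfT]; linarith
    have hμle : μ ≤ s - Int.fract (x T j) := by
      have h := Finset.inf'_le
        (fun j => if Int.fract (x T j) < s then s - Int.fract (x T j) else 1)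
        (Finset.mem_univ j)
      rw [if_pos hltT] at h
      exact le_trans (le_of_eq hμ) h
    have hsf : s - Int.fract (x T j) ≤ K * δ := by
      rw [hfT, hK]; linarith
    have hfin : μ < μ / 2 := lt_of_le_of_lt (le_trans hμle hsf) hKδμ
    linarith
  -- Step 2: feedback on trailing cell vanishes
  have hzero : ∀ t, t0 ≤ t → a i₀ (x t) = 0 := by
    intro t ht
    by_contra hne
    obtain ⟨j, hdj, hFs, hrp⟩ := key2 t ht hne
    have := hinv t ht
    linarith
  -- conclude monotonicity
  intro t1 t2 h01 h12
  have hmono : MonotoneOn g (Set.Ici t0) := by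
    apply monotoneOn_of_deriv_nonneg (convex_Ici t0) hgcont.continuousOn
    · intro τ _
      exact (hgdiff τ).differentiableWithinAt
    · intro τ hτ
      rw [interior_Ici] at hτ
      rw [(hg' τ).deriv, hzero τ (le_of_lt hτ)]
      simpa using hpos i₁ (x τ)
  exact hmono (Set.mem_Ici.mpr h01) (Set.mem_Ici.mpr (h01.trans h12)) h12
end

section
/- For the k = 2 cluster return map F on [0,1] with parameters 0 < s < r < 1, feedback value α = f(1/2) > -1, and r + (1+α)s < 1, F is given piecewise by F(x) = 1 - x on [0, r-s], F(x) = 1 - (1+α)x + α(r-s) on (r-s, r), F(x) = 1 - x - αs on [r, 1-(1+α)s), and F(x) = (1-x)/(1+α) on (1-(1+α)s, 1]. This F is continuous and strictly decreasing on [0,1], with F(0)=1 and F(1)=0. -/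
/-- For 0 < s < r < 1, α = f(1/2) > -1 and r + (1+α)s < 1, the
two-cluster return map F given by the four-piece formula is continuous and
strictly decreasing on [0,1], with F(0) = 1 and F(1) = 0. -/
theorem stmt_5 (s r α : ℝ) (hs : 0 < s) (hsr : s < r) (hr : r < 1)
    (hα : -1 < α) (hcase : r + (1 + α) * s < 1)
    (F : ℝ → ℝ)
    (hF : ∀ x,
      F x = if x ≤ r - s then 1 - x
            else if x < r then 1 - (1 + α) * x + α * (r - s)
            else if x < 1 - (1 + α) * s then 1 - x - α * s
            else (1 - x) / (1 + α)) :
    ContinuousOn F (Set.Icc 0 1) ∧ StrictAntiOn F (Set.Icc 0 1) ∧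
      F 0 = 1 ∧ F 1 = 0 := by
  have h1α : (0:ℝ) < 1 + α := by linarith
  have hps : 0 < (1 + α) * s := mul_pos h1α hs
  set G : ℝ → ℝ := fun x =>
    if x ≤ r - s then 1 - x
    else if x ≤ r then 1 - (1 + α) * x + α * (r - s)
    else if x ≤ 1 - (1 + α) * s then 1 - x - α * s
    else (1 - x) / (1 + α) with hG
  have hFG : ∀ x, F x = G x := by
    intro x
    rw [hF, hG]
    simp only
    by_cases h1 : x ≤ r - s
    · rw [if_pos h1, if_pos h1]
    · rw [if_neg h1, if_neg h1]
      rcases lt_trichotomy x r with h2 | h2 | h2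
      · rw [if_pos h2, if_pos h2.le]
      · subst h2
        rw [if_neg (lt_irrefl x), if_pos le_rfl]
        have h3 : x < 1 - (1 + α) * s := by linarith
        rw [if_pos h3]
        ring
      · rw [if_neg (not_lt.mpr h2.le), if_neg (not_le.mpr h2)]
        rcases lt_trichotomy x (1 - (1 + α) * s) with h3 | h3 | h3
        · rw [if_pos h3, if_pos h3.le]
        · subst h3
          rw [if_neg (lt_irrefl _), if_pos le_rfl]
          field_simp
          ring
        · rw [if_neg (not_lt.mpr h3.le), if_neg (not_le.mpr h3)]
  have hGcont : Continuous G := by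
    rw [hG]
    refine Continuous.if_le (continuous_const.sub continuous_id) ?_ continuous_id
      continuous_const ?_
    · refine Continuous.if_le
        ((continuous_const.sub (continuous_const.mul continuous_id)).add continuous_const) ?_
        continuous_id continuous_const ?_
      · refine Continuous.if_le ((continuous_const.sub continuous_id).sub continuous_const)
          ((continuous_const.sub continuous_id).div_const _) continuous_id continuous_const ?_
        · intro x hx
          have hx' : x = 1 - (1 + α) * s := hx
          subst hx'
          field_simp
          ring
      · intro x hx
        have hx' : x = r := hx
        subst hx'
        rw [if_pos (show x ≤ 1 - (1 + α) * s by linarith)]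
        ring
    · intro x hx
      have hx' : x = r - s := hx
      subst hx'
      rw [if_pos (show r - s ≤ r by linarith)]
      ring
  have hGanti : StrictAnti G := by
    intro x y hxy
    rw [hG]
    simp only
    split_ifs <;>
      first
        | linarith
        | (rw [div_lt_div_iff₀ h1α h1α]
           nlinarith [mul_pos h1α (sub_pos.mpr hxy)])
        | (rw [div_lt_iff₀ h1α]
           nlinarith [mul_pos h1α (sub_pos.mpr hxy), mul_pos h1α hs,
             mul_nonneg (mul_nonneg h1α.le h1α.le) (show (0:ℝ) ≤ r - x by linarith),
             mul_pos h1α (show (0:ℝ) < 1 - r - (1 + α) * s by linarith)])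
        | (rw [div_lt_iff₀ h1α]
           nlinarith [mul_pos h1α (sub_pos.mpr hxy), mul_pos h1α hs,
             mul_nonneg h1α.le (show (0:ℝ) ≤ 1 - (1 + α) * s - x by linarith)])
        | nlinarith [mul_pos h1α (sub_pos.mpr hxy), mul_pos h1α hs]
  refine ⟨(hGcont.continuousOn).congr (fun x _ => hFG x), ?_, ?_, ?_⟩
  · exact fun x _ y _ hxy => by rw [hFG x, hFG y]; exact hGanti hxy
  · rw [hF]
    have h1 : (0:ℝ) ≤ r - s := by linarith
    rw [if_pos h1]; ring
  · rw [hF]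
    have h1 : ¬ ((1:ℝ) ≤ r - s) := by linarith
    have h2 : ¬ ((1:ℝ) < r) := by linarith
    have h3 : ¬ ((1:ℝ) < 1 - (1 + α) * s) := by linarith
    rw [if_neg h1, if_neg h2, if_neg h3]
    simp
end

section
/- Let n ≥ 1 and β > 0. Every complex root λ of the polynomial p(λ) = λ^n + (1+β)(λ^{n-1} + λ^{n-2} + ... + λ + 1) satisfies |λ| > 1. -/
/-- For n ≥ 1 and β > 0, every complex root of
p(λ) = λ^n + (1+β)(λ^{n-1} + ... + λ + 1) satisfies |λ| > 1. -/
theorem stmt_9 (n : ℕ) (hn : 1 ≤ n) (β : ℝ) (hβ : 0 < β) (lam : ℂ)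
    (hroot : lam ^ n + (1 + (β : ℂ)) * ∑ i ∈ Finset.range n, lam ^ i = 0) :
    1 < ‖lam‖ := by
  have hne1 : lam ≠ 1 := by
    intro h
    subst h
    simp at hroot
    have h2 : ((1 + (1 + (β:ℝ)) * n : ℝ) : ℂ) = 0 := by push_cast; linear_combination hroot
    have h3 : (1 + (1 + (β:ℝ)) * n : ℝ) = 0 := by exact_mod_cast h2
    have hn' : (1:ℝ) ≤ (n:ℝ) := by exact_mod_cast hn
    nlinarith
  have key : lam ^ n * (lam + β) = 1 + β := by
    have hg := geom_sum_mul lam n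
    linear_combination (lam - 1) * hroot - (1 + (β:ℂ)) * hg
  by_contra h
  push_neg at h
  -- h : Complex.abs lam ≤ 1
  have habs0 : (0:ℝ) ≤ ‖lam‖ := norm_nonneg lam
  have habsn : ‖lam ^ n‖ ≤ 1 := by
    rw [norm_pow]
    exact pow_le_one₀ habs0 h
  have hkeyabs : ‖lam ^ n‖ * ‖lam + β‖ = 1 + β := by
    rw [← norm_mul, key]
    have : ((1 + β : ℝ) : ℂ) = 1 + (β:ℂ) := by push_cast; ring
    rw [← this, Complex.norm_real, Real.norm_eq_abs]
    rw [abs_of_pos]; linarith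
  have hA : 1 + β ≤ ‖lam + β‖ := by
    have hAnn : (0:ℝ) ≤ ‖lam + β‖ := norm_nonneg _
    nlinarith [norm_nonneg (lam ^ n)]
  set a := lam.re with ha
  set b := lam.im with hb
  have hsq : a ^ 2 + b ^ 2 ≤ 1 := by
    have := Complex.sq_norm lam
    rw [Complex.normSq_apply] at this
    nlinarith [norm_nonneg lam]
  have hsq2 : (1 + β) ^ 2 ≤ (a + β) ^ 2 + b ^ 2 := by
    have h1 := Complex.sq_norm (lam + β)
    rw [Complex.normSq_apply] at h1
    simp [Complex.add_re, Complex.add_im] at h1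
    nlinarith [norm_nonneg (lam + β)]
  have ha1 : a = 1 := by nlinarith
  have hb0 : b = 0 := by nlinarith
  exact hne1 (Complex.ext ha1 hb0)
end

section
/- Let n ≥ 1 and -1 < β < 0. Every complex root λ of p(λ) = λ^n + (1+β)(λ^{n-1} + ... + λ + 1) satisfies |λ| < 1. -/
/-- For n ≥ 1 and -1 < β < 0, every complex root of
p(λ) = λ^n + (1+β)(λ^{n-1} + ... + λ + 1) satisfies |λ| < 1. -/
theorem stmt_10 (n : ℕ) (hn : 1 ≤ n) (β : ℝ) (hβ₁ : -1 < β) (hβ₂ : β < 0) (lam : ℂ)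
    (hroot : lam ^ n + (1 + (β : ℂ)) * ∑ i ∈ Finset.range n, lam ^ i = 0) :
    ‖lam‖ < 1 := by
  by_contra hcon
  push_neg at hcon
  have hβ' : (0:ℝ) < 1 + β := by linarith
  have hne1 : lam ≠ 1 := by
    rintro rfl
    simp only [one_pow, Finset.sum_const, Finset.card_range, nsmul_eq_mul, mul_one] at hroot
    have h := congrArg Complex.re hroot
    simp [Complex.add_re, Complex.mul_re] at h
    have hn1 : (1:ℝ) ≤ (n:ℝ) := by exact_mod_cast hn
    nlinarith
  have hgeom : (∑ i ∈ Finset.range n, lam ^ i) * (lam - 1) = lam ^ n - 1 := geom_sum_mul lam n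
  have key : lam ^ n * (lam + β) = 1 + β := by
    linear_combination (lam - 1) * hroot - (1 + (β:ℂ)) * hgeom
  have habs : ‖lam‖ ^ n * ‖lam + β‖ = 1 + β := by
    have h := congrArg (‖·‖) key
    rw [norm_mul, norm_pow] at h
    have h2 : ‖(1 + (β:ℂ))‖ = 1 + β := by
      rw [show (1 + (β:ℂ)) = ((1+β : ℝ) : ℂ) by push_cast; ring, Complex.norm_real, Real.norm_eq_abs,
        abs_of_pos hβ']
    rwa [h2] at h
  have hsub : ‖lam‖ + β ≤ ‖lam + β‖ := by
    have h1 : ‖lam‖ ≤ ‖lam + β‖ + ‖-(β:ℂ)‖ := by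
      calc ‖lam‖ = ‖(lam + β) + (-β)‖ := by ring_nf
      _ ≤ _ := norm_add_le _ _
    rw [norm_neg, Complex.norm_real, Real.norm_eq_abs, abs_of_neg hβ₂] at h1
    linarith
  rcases eq_or_lt_of_le hcon with heq | hlt
  · -- |lam| = 1 case
    have hnsq : lam.re * lam.re + lam.im * lam.im = 1 := by
      have h := Complex.sq_norm lam
      rw [← heq, Complex.normSq_apply] at h
      nlinarith
    have hre1 : lam.re ≤ 1 := by
      have := (abs_le.mp (le_of_le_of_eq (Complex.abs_re_le_norm lam) heq.symm)).2
      exact this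
    have hre : lam.re < 1 := by
      rcases lt_or_eq_of_le hre1 with h | h
      · exact h
      · exfalso
        apply hne1
        have him : lam.im = 0 := by nlinarith
        exact Complex.ext h him
    have hsq : (1 + β)^2 < ‖lam + β‖ ^ 2 := by
      have h := Complex.sq_norm (lam + β)
      rw [Complex.normSq_apply] at h
      simp [Complex.add_re, Complex.add_im] at h
      nlinarith
    have hgt : 1 + β < ‖lam + β‖ := by
      nlinarith [norm_nonneg (lam + β)]
    rw [← heq, one_pow, one_mul] at habs
    linarith
  · -- |lam| > 1 case
    have hpow : 1 ≤ ‖lam‖ ^ n := one_le_pow₀ hlt.le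
    nlinarith [norm_nonneg (lam + β)]
end
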